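/- For λ > 0, the monomials are orthogonal in the Bessel–Fischer inner product on ℂ[z] in one variable: defining [p,q] := p(𝓑) q̄(4z)|_{z=0} with 𝓑 = z d²/dz² + λ d/dz, one has [z^m, z^n] = 0 for m ≠ n and [z^m, z^m] = 4^m m! (λ)_m. Consequently the reproducing kernel of the degree-m component is 𝕂^m(z,w) = (z w̄)^m / (4^m m! (λ)_m) and Σ_m 𝕂^m(z,w) = Γ(λ) Ĩ_{λ−1}(√(z w̄)). -/

import Mathlib

open Polynomial

/-- The one-variable Bessel operator `𝓑 = z d²/dz² + λ d/dz` acting on polynomials. -/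
noncomputable def besselOp1 (l : ℝ) (p : ℂ[X]) : ℂ[X] :=
  X * derivative (derivative p) + C (l : ℂ) * derivative p

/-- The Bessel–Fischer pairing `[p,q] := p(𝓑) q̄(4z) |_{z=0}`, where `q̄` has the
conjugated coefficients of `q`. -/
noncomputable def besselFischer (l : ℝ) (p q : ℂ[X]) : ℂ :=
  eval 0 (∑ k ∈ p.support,
    p.coeff k • (besselOp1 l)^[k] ((q.map (starRingEnd ℂ)).comp (C (4 : ℂ) * X)))

lemma besselOp1_zero (l : ℝ) : besselOp1 l 0 = 0 := by simp [besselOp1]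

lemma besselOp1_C_mul (l : ℝ) (a : ℂ) (p : ℂ[X]) :
    besselOp1 l (C a * p) = C a * besselOp1 l p := by
  simp [besselOp1]; ring

lemma besselOp1_iter_C_mul (l : ℝ) (m : ℕ) (a : ℂ) (p : ℂ[X]) :
    (besselOp1 l)^[m] (C a * p) = C a * (besselOp1 l)^[m] p := by
  induction m generalizing p with
  | zero => simp
  | succ m ih => simp [Function.iterate_succ_apply, besselOp1_C_mul, ih]

lemma besselOp1_X_pow (l : ℝ) (k : ℕ) :
    besselOp1 l (X ^ (k+1) : ℂ[X]) = C ((k+1) * ((l:ℂ) + k)) * X ^ k := by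
  cases k with
  | zero => simp [besselOp1]
  | succ k =>
    simp only [besselOp1, derivative_X_pow, Nat.add_sub_cancel, derivative_C_mul]
    push_cast
    simp only [C_add, C_mul, C_1, map_natCast, C_0, map_ofNat]
    ring

lemma iter_diag (l : ℝ) (n : ℕ) :
    (besselOp1 l)^[n] (X ^ n : ℂ[X])
      = C ((n.factorial : ℂ) * (ascPochhammer ℂ n).eval (l:ℂ)) := by
  induction n with
  | zero => simp
  | succ n ih =>
    rw [Function.iterate_succ_apply, besselOp1_X_pow, besselOp1_iter_C_mul, ih,
      ← C_mul, ascPochhammer_succ_right]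
    simp [Nat.factorial_succ]
    ring

lemma iter_lt (l : ℝ) (m n : ℕ) (h : m ≤ n) :
    ∃ c : ℂ, (besselOp1 l)^[m] (X ^ n : ℂ[X]) = C c * X ^ (n - m) := by
  induction m generalizing n with
  | zero => exact ⟨1, by simp⟩
  | succ m ih =>
    obtain ⟨k, rfl⟩ : ∃ k, n = k + 1 := ⟨n - 1, by omega⟩
    rw [Function.iterate_succ_apply, besselOp1_X_pow, besselOp1_iter_C_mul]
    obtain ⟨c, hc⟩ := ih k (by omega)
    exact ⟨_ * c, by rw [hc, ← mul_assoc, ← C_mul]; congr 2; omega⟩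

lemma iter_gt (l : ℝ) (m n : ℕ) (h : n < m) :
    (besselOp1 l)^[m] (X ^ n : ℂ[X]) = 0 := by
  obtain ⟨k, rfl⟩ : ∃ k, m = k + 1 + n := ⟨m - 1 - n, by omega⟩
  rw [Function.iterate_add_apply, iter_diag, Function.iterate_succ_apply,
    show besselOp1 l (C _) = 0 by simp [besselOp1]]
  exact Function.iterate_fixed (besselOp1_zero l) k

lemma bf_monomial (l : ℝ) (m n : ℕ) :
    besselFischer l (X ^ m) (X ^ n)
      = 4 ^ n * eval 0 ((besselOp1 l)^[m] (X ^ n : ℂ[X])) := by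
  rw [besselFischer]
  have h1 : ((X : ℂ[X]) ^ n).map (starRingEnd ℂ) = X ^ n := by simp
  rw [h1]
  have h2 : ((X : ℂ[X]) ^ n).comp (C 4 * X) = C (4^n) * X ^ n := by
    rw [pow_comp, X_comp, mul_pow, ← C_pow]
  rw [h2, support_X_pow, Finset.sum_singleton, coeff_X_pow_self, one_smul,
    besselOp1_iter_C_mul]
  simp

lemma poch_cast (l : ℝ) (n : ℕ) :
    (((ascPochhammer ℝ n).eval l : ℝ) : ℂ) = (ascPochhammer ℂ n).eval (l:ℂ) := by
  rw [ascPochhammer_eval₂ (algebraMap ℝ ℂ)]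
  exact (eval₂_at_apply (algebraMap ℝ ℂ) l).symm

lemma gamma_shift (l : ℝ) (hl : 0 < l) (n : ℕ) :
    Complex.Gamma ((n:ℂ) + l) = (ascPochhammer ℂ n).eval (l:ℂ) * Complex.Gamma l := by
  induction n with
  | zero => simp
  | succ n ih =>
    have hne : (n:ℂ) + l ≠ 0 := by
      intro h
      have := congrArg Complex.re h
      simp [Complex.add_re] at this
      nlinarith [this]
    rw [show ((n+1:ℕ):ℂ) + l = ((n:ℂ) + l) + 1 by push_cast; ring,
      Complex.Gamma_add_one _ hne, ih, ascPochhammer_succ_right]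
    simp
    ring


/-- For `λ > 0`, the monomials are orthogonal in the Bessel–Fischer inner product:
`[z^m, z^n] = 0` for `m ≠ n` and `[z^m, z^m] = 4^m m! (λ)_m`. Consequently the reproducing
kernel of the degree-`m` component is `𝕂^m(z,w) = (z w̄)^m/(4^m m! (λ)_m)` and
`∑_m 𝕂^m(z,w) = Γ(λ) Ĩ_{λ−1}(√(z w̄))`. -/
theorem stmt_19 (l : ℝ) (hl : 0 < l) :
    (∀ m n : ℕ, m ≠ n → besselFischer l (X ^ m) (X ^ n) = 0) ∧
    (∀ m : ℕ, besselFischer l (X ^ m) (X ^ m)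
        = 4 ^ m * (m.factorial : ℂ) * (((ascPochhammer ℝ m).eval l : ℝ) : ℂ)) ∧
    (∀ z w : ℂ, ∑' m : ℕ,
          (z * (starRingEnd ℂ) w) ^ m
            / (4 ^ m * (m.factorial : ℂ) * (((ascPochhammer ℝ m).eval l : ℝ) : ℂ))
        = Complex.Gamma (l : ℂ) * ∑' n : ℕ,
            (z * (starRingEnd ℂ) w / 4) ^ n
              / (Complex.Gamma ((n : ℂ) + (l : ℂ)) * (n.factorial : ℂ))) := by
  refine ⟨?_, ?_, ?_⟩
  · intro m n hmn
    rw [bf_monomial]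
    rcases lt_or_gt_of_ne hmn with h | h
    · obtain ⟨c, hc⟩ := iter_lt l m n h.le
      rw [hc]
      simp [zero_pow (by omega : n - m ≠ 0)]
    · rw [iter_gt l m n h]; simp
  · intro m
    rw [bf_monomial, iter_diag, poch_cast]
    simp
    ring
  · intro z w
    rw [← tsum_mul_left]
    refine tsum_congr fun n => ?_
    rw [gamma_shift l hl n, poch_cast]
    have hG : Complex.Gamma (l:ℂ) ≠ 0 :=
      Complex.Gamma_ne_zero_of_re_pos (by simpa using hl)
    have hP : (ascPochhammer ℂ n).eval (l:ℂ) ≠ 0 := by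
      rw [← poch_cast]
      exact_mod_cast (ascPochhammer_pos n l hl).ne'
    have hF : (n.factorial : ℂ) ≠ 0 := by exact_mod_cast n.factorial_ne_zero
    rw [div_pow]
    field_simp
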